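/- Given an α-competitive algorithm ALG for the Online Knapsack Problem in the random order model, the Reduction Algorithm (run ALG with probability δ = α/(e+α) on values t_i·h_i and weights t_i, otherwise run the e-competitive Secretary Algorithm on values t_i·h_i) is (e + α)·C-competitive for RAO, where C is the accuracy of the hints and all t_i ≤ T. -/

import Mathlib

open Finset

lemma frac_knapsack {n T : ℕ} (hn : 0 < n) (t h : Fin n → ℕ)
    (τ : Fin n → ℕ) (hτ : ∀ i, τ i ≤ t i) (hτT : ∑ i, τ i ≤ T) :
    ∃ (F : Finset (Fin n)) (i0 : Fin n), (∑ i ∈ F, t i ≤ T) ∧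
      (∑ i, (τ i : ℝ) * (h i : ℝ)) ≤
        (∑ i ∈ F, (t i : ℝ) * (h i : ℝ)) + (t i0 : ℝ) * (h i0 : ℝ) := by
  set σ := Tuple.sort (fun i => OrderDual.toDual (h i)) with hσ
  have hanti : ∀ {j j' : Fin n}, j ≤ j' → h (σ j') ≤ h (σ j) := by
    intro j j' hj
    exact Tuple.monotone_sort (fun i => OrderDual.toDual (h i)) hj
  set W : ℕ → ℕ := fun k => ∑ j ∈ univ.filter (fun j : Fin n => (j : ℕ) < k), t (σ j)
    with hW
  set k := Nat.findGreatest (fun k => W k ≤ T) n with hkdef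
  have hW0 : W 0 = 0 := by simp [hW]
  have hWk : W k ≤ T := Nat.findGreatest_spec (P := fun k => W k ≤ T) (Nat.zero_le n) (by simp [hW0])
  have hkn : k ≤ n := Nat.findGreatest_le n
  by_cases hk : k = n
  · -- everything fits
    refine ⟨Finset.univ, ⟨0, hn⟩, ?_, ?_⟩
    · have hWn : W n = ∑ i, t i := by
        have h1 : (univ.filter (fun j : Fin n => (j : ℕ) < n)) = univ := by
          ext j; simp [j.isLt]
        rw [hW]; simp only [h1]
        exact Equiv.sum_comp σ t
      rw [← hWn, ← hk]; exact hWk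
    · have h1 : (∑ i, (τ i : ℝ) * (h i : ℝ)) ≤ ∑ i, (t i : ℝ) * (h i : ℝ) := by
        apply Finset.sum_le_sum
        intro i _
        have h2 : (τ i : ℝ) ≤ (t i : ℝ) := by exact_mod_cast hτ i
        have h3 : (0:ℝ) ≤ (h i : ℝ) := by positivity
        exact mul_le_mul_of_nonneg_right h2 h3
      have h4 : (0:ℝ) ≤ (t (⟨0, hn⟩ : Fin n) : ℝ) * (h (⟨0, hn⟩ : Fin n) : ℝ) := by
        positivity
      linarith
  · -- k < n, split at the pivot item i0 = σ ⟨k, hklt⟩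
    have hklt : k < n := lt_of_le_of_ne hkn hk
    set i0 : Fin n := σ ⟨k, hklt⟩ with hi0
    set A : Finset (Fin n) := univ.filter (fun j : Fin n => (j : ℕ) < k) with hA
    have hWsucc : ¬ (W (k + 1) ≤ T) :=
      Nat.findGreatest_is_greatest (P := fun k => W k ≤ T) (Nat.lt_succ_self k) hklt
    have hstep : W (k + 1) = W k + t i0 := by
      have hset : univ.filter (fun j : Fin n => (j : ℕ) < k + 1)
          = insert (⟨k, hklt⟩ : Fin n) A := by
        ext j
        simp only [hA, mem_filter, mem_univ, true_and, mem_insert, Fin.ext_iff]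
        omega
      rw [hW]
      simp only [hset]
      rw [Finset.sum_insert (by simp [hA])]
      rw [← hA, ← hi0]
      exact Nat.add_comm _ _
    have hTlt : (T : ℝ) < (W k : ℝ) + (t i0 : ℝ) := by
      have : T < W k + t i0 := by omega
      exact_mod_cast this
    refine ⟨A.image σ, i0, ?_, ?_⟩
    · have : ∑ i ∈ A.image σ, t i = W k := by
        rw [Finset.sum_image (fun a _ b _ hab => σ.injective hab)]
      rw [this]; exact hWk
    · have himg : ∀ f : Fin n → ℝ, ∑ i ∈ A.image σ, f i = ∑ j ∈ A, f (σ j) := by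
        intro f
        rw [Finset.sum_image (fun a _ b _ hab => σ.injective hab)]
      rw [himg]
      -- reindex the LHS by σ
      have hre : (∑ i, (τ i : ℝ) * (h i : ℝ))
          = ∑ j, (τ (σ j) : ℝ) * (h (σ j) : ℝ) :=
        (Equiv.sum_comp σ (fun i => (τ i : ℝ) * (h i : ℝ))).symm
      rw [hre]
      have hsplit : (∑ j, (τ (σ j) : ℝ) * (h (σ j) : ℝ))
          = (∑ j ∈ A, (τ (σ j) : ℝ) * (h (σ j) : ℝ))
            + ∑ j ∈ Aᶜ, (τ (σ j) : ℝ) * (h (σ j) : ℝ) :=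
        (Finset.sum_add_sum_compl A _).symm
      rw [hsplit]
      -- bound each part against (h i0)-shifted quantities
      have hbA : (∑ j ∈ A, (τ (σ j) : ℝ) * (h (σ j) : ℝ))
          ≤ (∑ j ∈ A, (t (σ j) : ℝ) * (h (σ j) : ℝ))
            - (h i0 : ℝ) * (W k : ℝ)
            + (h i0 : ℝ) * ∑ j ∈ A, (τ (σ j) : ℝ) := by
        have hWsum : (W k : ℝ) = ∑ j ∈ A, (t (σ j) : ℝ) := by
          rw [hW]; push_cast; rfl
        rw [hWsum, Finset.mul_sum, Finset.mul_sum, ← Finset.sum_sub_distrib,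
          ← Finset.sum_add_distrib]
        apply Finset.sum_le_sum
        intro j hj
        have hjk : j ≤ (⟨k, hklt⟩ : Fin n) := by
          simp only [hA, mem_filter, mem_univ, true_and] at hj
          exact le_of_lt hj
        have hh : (h i0 : ℝ) ≤ (h (σ j) : ℝ) := by exact_mod_cast hanti hjk
        have hτt : (τ (σ j) : ℝ) ≤ (t (σ j) : ℝ) := by exact_mod_cast hτ (σ j)
        nlinarith [hh, hτt]
      have hbB : (∑ j ∈ Aᶜ, (τ (σ j) : ℝ) * (h (σ j) : ℝ))
          ≤ (h i0 : ℝ) * ∑ j ∈ Aᶜ, (τ (σ j) : ℝ) := by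
        rw [Finset.mul_sum]
        apply Finset.sum_le_sum
        intro j hj
        have hjk : (⟨k, hklt⟩ : Fin n) ≤ j := by
          simp only [hA, mem_compl, mem_filter, mem_univ, true_and, not_lt] at hj
          exact hj
        have hh : (h (σ j) : ℝ) ≤ (h i0 : ℝ) := by exact_mod_cast hanti hjk
        have hτ0 : (0:ℝ) ≤ (τ (σ j) : ℝ) := by positivity
        nlinarith [hh, hτ0]
      have hτsum : (∑ j ∈ A, (τ (σ j) : ℝ)) + (∑ j ∈ Aᶜ, (τ (σ j) : ℝ)) ≤ (T : ℝ) := by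
        rw [Finset.sum_add_sum_compl A]
        have h1 : ∑ j, (τ (σ j) : ℝ) = ∑ i, (τ i : ℝ) :=
          Equiv.sum_comp σ (fun i => (τ i : ℝ))
        rw [h1]
        exact_mod_cast hτT
      have hh0 : (0:ℝ) ≤ (h i0 : ℝ) := by positivity
      nlinarith [hbA, hbB, hτsum, hTlt, hh0,
        mul_le_mul_of_nonneg_left hτsum hh0]


/-- Given an `α`-competitive algorithm `ALG` for the Online Knapsack
Problem in the random order model (modeled by its selected set `S π` for each arrival
order `π`, with the competitiveness guarantee against every feasible integral
knapsack solution) and the `e`-competitive Secretary Algorithm (modeled by its pick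
`sec π`, with expected hint-value at least `(1/e) · max_i t i · h i`), the Reduction
Algorithm — run `ALG` (reading selected articles completely) with probability
`δ = α/(e+α)` and otherwise the Secretary Algorithm — is `(e + α)·C`-competitive for
RAO, where `C` is the accuracy of the hints and all `t i ≤ T`. -/
theorem reduction_algorithm_competitive (n T : ℕ) (hn : 0 < n)
    (t h : Fin n → ℕ) (c : Fin n → ℕ → ℕ) (C α : ℝ) (hC : 0 < C) (hα : 0 < α)
    (hcod : ∀ i j, c i j ≤ h i)
    (htpos : ∀ i, 0 < t i) (hhpos : ∀ i, 0 < h i) (htT : ∀ i, t i ≤ T)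
    -- accuracy of the hints:  h i ≤ C · (Σ_{j=1}^{t i} c i j) / t i
    (hacc : ∀ i, ((t i : ℝ) * (h i : ℝ)) ≤ C * ∑ j ∈ Finset.Icc 1 (t i), (c i j : ℝ))
    -- the black-box online knapsack algorithm and its α-competitiveness
    (S : Equiv.Perm (Fin n) → Finset (Fin n))
    (hSfeas : ∀ π, ∑ i ∈ S π, t i ≤ T)
    (halg : ∀ F : Finset (Fin n), ∑ i ∈ F, t i ≤ T →
      (∑ i ∈ F, (t i : ℝ) * (h i : ℝ)) ≤
        α * ((∑ π : Equiv.Perm (Fin n), ∑ i ∈ S π, (t i : ℝ) * (h i : ℝ)) /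
              (Nat.factorial n)))
    -- the secretary algorithm and its e-competitiveness for the best single item
    (sec : Equiv.Perm (Fin n) → Fin n)
    (hsec : ∀ i, ((t i : ℝ) * (h i : ℝ)) ≤
        Real.exp 1 * ((∑ π : Equiv.Perm (Fin n),
            (t (sec π) : ℝ) * (h (sec π) : ℝ)) / (Nat.factorial n))) :
    -- conclusion: every feasible offline RAO solution τ is within (e+α)·C of the
    -- Reduction Algorithm's expected information gain
    ∀ τ : Fin n → ℕ, (∀ i, τ i ≤ t i) → (∑ i, τ i ≤ T) →
      (∑ i, ∑ j ∈ Finset.Icc 1 (τ i), (c i j : ℝ)) ≤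
        (Real.exp 1 + α) * C *
          ((α / (Real.exp 1 + α)) *
              ((∑ π : Equiv.Perm (Fin n), ∑ i ∈ S π,
                  ∑ j ∈ Finset.Icc 1 (t i), (c i j : ℝ)) / (Nat.factorial n)) +
           (Real.exp 1 / (Real.exp 1 + α)) *
              ((∑ π : Equiv.Perm (Fin n),
                  ∑ j ∈ Finset.Icc 1 (t (sec π)), (c (sec π) j : ℝ)) /
                (Nat.factorial n))) := by
  intro τ hτ hτT
  obtain ⟨F, i0, hF, hfrac⟩ := frac_knapsack hn t h τ hτ hτT
  have hE : (0:ℝ) < Real.exp 1 := Real.exp_pos 1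
  have hN : (0:ℝ) < (Nat.factorial n : ℝ) := by
    exact_mod_cast Nat.factorial_pos n
  set N : ℝ := (Nat.factorial n : ℝ) with hNdef
  -- Step 1: information in the offline solution is at most its hint value
  have h1 : (∑ i, ∑ j ∈ Finset.Icc 1 (τ i), (c i j : ℝ)) ≤
      ∑ i, (τ i : ℝ) * (h i : ℝ) := by
    apply Finset.sum_le_sum
    intro i _
    calc ∑ j ∈ Finset.Icc 1 (τ i), (c i j : ℝ)
        ≤ ∑ j ∈ Finset.Icc 1 (τ i), (h i : ℝ) := by
          apply Finset.sum_le_sum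
          intro j _
          exact_mod_cast hcod i j
      _ = (τ i : ℝ) * (h i : ℝ) := by
          rw [Finset.sum_const, Nat.card_Icc, nsmul_eq_mul]
          simp
  -- Step 2: guarantees of the two algorithms
  have h2 := halg F hF
  have h3 := hsec i0
  -- Step 3: hints versus information, for both algorithms
  have hA : (∑ π : Equiv.Perm (Fin n), ∑ i ∈ S π, (t i : ℝ) * (h i : ℝ)) ≤
      C * ∑ π : Equiv.Perm (Fin n), ∑ i ∈ S π,
        ∑ j ∈ Finset.Icc 1 (t i), (c i j : ℝ) := by
    rw [Finset.mul_sum]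
    apply Finset.sum_le_sum
    intro π _
    rw [Finset.mul_sum]
    exact Finset.sum_le_sum fun i _ => hacc i
  have hB : (∑ π : Equiv.Perm (Fin n), (t (sec π) : ℝ) * (h (sec π) : ℝ)) ≤
      C * ∑ π : Equiv.Perm (Fin n),
        ∑ j ∈ Finset.Icc 1 (t (sec π)), (c (sec π) j : ℝ) := by
    rw [Finset.mul_sum]
    exact Finset.sum_le_sum fun π _ => hacc (sec π)
  -- abbreviations
  set sA : ℝ := ∑ π : Equiv.Perm (Fin n), ∑ i ∈ S π, (t i : ℝ) * (h i : ℝ) with hsA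
  set sB : ℝ := ∑ π : Equiv.Perm (Fin n), (t (sec π) : ℝ) * (h (sec π) : ℝ) with hsB
  set sAi : ℝ := ∑ π : Equiv.Perm (Fin n), ∑ i ∈ S π,
      ∑ j ∈ Finset.Icc 1 (t i), (c i j : ℝ) with hsAi
  set sBi : ℝ := ∑ π : Equiv.Perm (Fin n),
      ∑ j ∈ Finset.Icc 1 (t (sec π)), (c (sec π) j : ℝ) with hsBi
  have hEα : Real.exp 1 + α ≠ 0 := by positivity
  have hRHS : (Real.exp 1 + α) * C *
      ((α / (Real.exp 1 + α)) * (sAi / N) +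
        (Real.exp 1 / (Real.exp 1 + α)) * (sBi / N)) =
      C * (α * (sAi / N) + Real.exp 1 * (sBi / N)) := by
    field_simp
  rw [hRHS]
  have dA : sA / N ≤ C * (sAi / N) := by
    rw [← mul_div_assoc]
    exact div_le_div_of_nonneg_right hA hN.le |>.trans_eq rfl
  have dB : sB / N ≤ C * (sBi / N) := by
    rw [← mul_div_assoc]
    exact div_le_div_of_nonneg_right hB hN.le |>.trans_eq rfl
  nlinarith [mul_le_mul_of_nonneg_left dA hα.le, mul_le_mul_of_nonneg_left dB hE.le]
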